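/- Let $(Y_n)_{n\ge0}$ be a Markov chain on $\S=\{1,\dots,M\}$ with entrywise positive transition matrix $P$, let $b:\S\to\mathbb{R}$, let $\tau>0$, and let $\bar\lambda_1$ be the Perron eigenvalue of $(e^{\tau b(i)}P_{ij})$. Then there exist positive constants $\widetilde K_1,\widetilde K_2$ and $T>0$ such that for all $t\ge T$ and every initial state $i_0$, $\widetilde K_1\,\bar\lambda_1^{\,t/\tau}\le \mathbb{E}_{i_0}\big[\exp\big(\tau\sum_{k=0}^{\lfloor t/\tau\rfloor-1} b(Y_k)+ (t-\lfloor t/\tau\rfloor\tau)b(Y_{\lfloor t/\tau\rfloor})\big)\big]\le \widetilde K_2\,\bar\lambda_1^{\,t/\tau}$. -/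

import Mathlib

open Matrix Finset


lemma my_perron {M : ℕ} (hM : 0 < M) (A : Matrix (Fin M) (Fin M) ℝ)
    (h : ∀ i j, 0 < A i j) :
    ∃ r : ℝ, 0 < r ∧ ∃ u : Fin M → ℝ, (∀ i, 0 < u i) ∧ A *ᵥ u = r • u := by
  haveI : NeZero M := ⟨hM.ne'⟩
  have hne : (Finset.univ : Finset (Fin M)).Nonempty := univ_nonempty
  have hne2 : (Finset.univ : Finset (Fin M × Fin M)).Nonempty := univ_nonempty
  set amin : ℝ := Finset.univ.inf' hne2 (fun p : Fin M × Fin M => A p.1 p.2) with hamin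
  set amax : ℝ := Finset.univ.sup' hne2 (fun p : Fin M × Fin M => A p.1 p.2) with hamax
  have haminpos : 0 < amin := by
    rw [hamin, Finset.lt_inf'_iff]
    exact fun p _ => h p.1 p.2
  have hminle : ∀ i j, amin ≤ A i j := fun i j =>
    Finset.inf'_le _ (Finset.mem_univ (i, j))
  have hlemax : ∀ i j, A i j ≤ amax := fun i j =>
    Finset.le_sup' (fun p : Fin M × Fin M => A p.1 p.2) (Finset.mem_univ (i, j))
  have hamaxpos : 0 < amax := lt_of_lt_of_le haminpos (le_trans (hminle ⟨0, hM⟩ ⟨0, hM⟩) (hlemax _ _))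
  set c : ℝ := amin / (M * amax) with hc
  have hcpos : 0 < c := div_pos haminpos (by positivity)
  set S : Set (Fin M → ℝ) := {x | (∀ i, c ≤ x i) ∧ ∑ i, x i = 1} with hS
  -- S is nonempty
  have hminmax : amin ≤ amax := le_trans (hminle ⟨0, hM⟩ ⟨0, hM⟩) (hlemax ⟨0, hM⟩ ⟨0, hM⟩)
  have hcM : c * M ≤ 1 := by
    rw [hc, div_mul_eq_mul_div, div_le_one (by positivity)]
    have : (0:ℝ) ≤ M := Nat.cast_nonneg M
    nlinarith
  have hSne : S.Nonempty := by
    refine ⟨fun _ => (M : ℝ)⁻¹, fun i => ?_, ?_⟩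
    · rw [show ((M:ℝ))⁻¹ = 1 / M by rw [one_div], le_div_iff₀ (by exact_mod_cast hM)]
      linarith
    · simp [Finset.sum_const, Finset.card_univ]
  have hSsub : S ⊆ Set.pi Set.univ (fun _ : Fin M => Set.Icc c 1) := by
    intro x hx
    rw [Set.mem_univ_pi]
    intro i
    refine ⟨hx.1 i, ?_⟩
    have h1 : x i ≤ ∑ j, x j :=
      Finset.single_le_sum (fun j _ => le_trans hcpos.le (hx.1 j)) (Finset.mem_univ i)
    rw [hx.2] at h1
    exact h1
  have hSclosed : IsClosed S := by
    have h1 : IsClosed {x : Fin M → ℝ | ∀ i, c ≤ x i} := by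
      have he : {x : Fin M → ℝ | ∀ i, c ≤ x i} = ⋂ i, {x | c ≤ x i} := by ext x; simp
      rw [he]
      exact isClosed_iInter fun i => isClosed_le continuous_const (continuous_apply i)
    have h2 : IsClosed {x : Fin M → ℝ | ∑ i, x i = 1} :=
      isClosed_eq (by continuity) continuous_const
    exact h1.inter h2
  have hScompact : IsCompact S :=
    IsCompact.of_isClosed_subset (isCompact_univ_pi fun _ => isCompact_Icc) hSclosed hSsub
  set g : (Fin M → ℝ) → ℝ := fun x => Finset.univ.inf' hne (fun i => (A *ᵥ x) i / x i) with hg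
  have hgcont : ContinuousOn g S := by
    apply ContinuousOn.finset_inf'_apply hne
    intro i _
    apply ContinuousOn.div
    · have he : (fun x : Fin M → ℝ => (A *ᵥ x) i) = fun x => ∑ j, A i j * x j := by
        ext x; simp [Matrix.mulVec, dotProduct]
      rw [he]
      exact (continuous_finset_sum _ fun j _ => continuous_const.mul (continuous_apply j)).continuousOn
    · exact (continuous_apply i).continuousOn
    · intro x hx; exact (lt_of_lt_of_le hcpos (hx.1 i)).ne'
  obtain ⟨x, hxS, hmax⟩ := hScompact.exists_isMaxOn hSne hgcont
  set r : ℝ := g x with hr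
  have hxpos : ∀ i, 0 < x i := fun i => lt_of_lt_of_le hcpos (hxS.1 i)
  have hAvpos : ∀ z : Fin M → ℝ, (∀ j, 0 < z j) → ∀ i, 0 < (A *ᵥ z) i := by
    intro z hz i
    simp only [Matrix.mulVec, dotProduct]
    exact Finset.sum_pos (fun j _ => mul_pos (h i j) (hz j)) hne
  have hrpos : 0 < r := by
    rw [hr, hg]
    rw [Finset.lt_inf'_iff]
    intro i _
    exact div_pos (hAvpos x hxpos i) (hxpos i)
  have hrx : ∀ i, r * x i ≤ (A *ᵥ x) i := by
    intro i
    have h1 : r ≤ (A *ᵥ x) i / x i := Finset.inf'_le _ (Finset.mem_univ i)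
    exact (le_div_iff₀ (hxpos i)).1 h1
  refine ⟨r, hrpos, x, hxpos, ?_⟩
  by_contra hne'
  have hex : ∃ i0, r * x i0 < (A *ᵥ x) i0 := by
    by_contra hcon
    push_neg at hcon
    apply hne'
    funext i
    have := le_antisymm (hcon i) (hrx i)
    simp only [Pi.smul_apply, smul_eq_mul]
    linarith
  obtain ⟨i0, hi0⟩ := hex
  have hstrict : ∀ i, r * (A *ᵥ x) i < (A *ᵥ (A *ᵥ x)) i := by
    intro i
    have h1 : (A *ᵥ (A *ᵥ x)) i - r * (A *ᵥ x) i = (A *ᵥ (A *ᵥ x - r • x)) i := by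
      rw [Matrix.mulVec_sub, Matrix.mulVec_smul]
      simp [Pi.smul_apply, smul_eq_mul]
    have h2 : 0 < (A *ᵥ (A *ᵥ x - r • x)) i := by
      simp only [Matrix.mulVec, dotProduct]
      apply Finset.sum_pos'
      · intro j _
        have := hrx j
        have hAij := (h i j).le
        simp only [Pi.sub_apply, Pi.smul_apply, smul_eq_mul]
        nlinarith
      · refine ⟨i0, Finset.mem_univ i0, ?_⟩
        have hz : 0 < (A *ᵥ x) i0 - r * x i0 := by linarith
        have := h i i0
        simp only [Pi.sub_apply, Pi.smul_apply, smul_eq_mul]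
        nlinarith
    linarith
  set s : ℝ := ∑ i, (A *ᵥ x) i with hs
  have hspos : 0 < s := Finset.sum_pos (fun i _ => hAvpos x hxpos i) hne
  have hAxlow : ∀ i, amin ≤ (A *ᵥ x) i := by
    intro i
    simp only [Matrix.mulVec, dotProduct]
    calc amin = amin * ∑ j, x j := by rw [hxS.2]; ring
    _ = ∑ j, amin * x j := by rw [Finset.mul_sum]
    _ ≤ ∑ j, A i j * x j :=
      Finset.sum_le_sum fun j _ => mul_le_mul_of_nonneg_right (hminle i j) (hxpos j).le
  have hsupper : s ≤ M * amax := by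
    rw [hs]
    have h1 : ∀ i, (A *ᵥ x) i ≤ amax := by
      intro i
      simp only [Matrix.mulVec, dotProduct]
      calc ∑ j, A i j * x j ≤ ∑ j, amax * x j :=
        Finset.sum_le_sum fun j _ => mul_le_mul_of_nonneg_right (hlemax i j) (hxpos j).le
      _ = amax * ∑ j, x j := by rw [Finset.mul_sum]
      _ = amax := by rw [hxS.2]; ring
    calc ∑ i, (A *ᵥ x) i ≤ ∑ _i : Fin M, amax := Finset.sum_le_sum fun i _ => h1 i
    _ = M * amax := by simp [Finset.sum_const, Finset.card_univ]
  set y : Fin M → ℝ := s⁻¹ • (A *ᵥ x) with hy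
  have hyS : y ∈ S := by
    constructor
    · intro i
      have h1 : c ≤ (A *ᵥ x) i / s :=
        div_le_div₀ (hAvpos x hxpos i).le (hAxlow i) hspos hsupper
      simpa [hy, Pi.smul_apply, smul_eq_mul, inv_mul_eq_div] using h1
    · simp only [hy, Pi.smul_apply, smul_eq_mul]
      rw [← Finset.mul_sum, ← hs]
      field_simp
  have hgy : r < g y := by
    rw [hg, Finset.lt_inf'_iff]
    intro i _
    have hyi : y i = s⁻¹ * (A *ᵥ x) i := rfl
    have hAyi : (A *ᵥ y) i = s⁻¹ * (A *ᵥ (A *ᵥ x)) i := by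
      rw [hy, Matrix.mulVec_smul]; rfl
    rw [hyi, hAyi, mul_div_mul_left _ _ (inv_ne_zero hspos.ne')]
    exact (lt_div_iff₀ (hAvpos x hxpos i)).2 (by linarith [hstrict i])
  have hle := hmax hyS
  simp only [Set.mem_setOf_eq] at hle
  exact absurd hle (not_le.2 hgy)

lemma my_mem_spectrum {M : ℕ} (A : Matrix (Fin M) (Fin M) ℝ)
    {r : ℝ} {w : Fin M → ℝ} (hw : ∃ i, w i ≠ 0)
    (heig : A *ᵥ w = r • w) : (r : ℂ) ∈ spectrum ℂ (A.map Complex.ofReal) := by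
  rw [← AlgEquiv.spectrum_eq (Matrix.toLinAlgEquiv' : Matrix (Fin M) (Fin M) ℂ ≃ₐ[ℂ] _)]
  rw [← Module.End.hasEigenvalue_iff_mem_spectrum]
  set wc : Fin M → ℂ := fun i => (w i : ℂ) with hwc
  apply Module.End.hasEigenvalue_of_hasEigenvector (x := wc)
  constructor
  · rw [Module.End.mem_eigenspace_iff]
    show Matrix.toLinAlgEquiv' (A.map Complex.ofReal) wc = (r : ℂ) • wc
    have : (A.map Complex.ofReal) *ᵥ wc = (r : ℂ) • wc := by
      funext i
      have h1 := congrFun heig i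
      simp only [Matrix.mulVec, dotProduct, Pi.smul_apply, smul_eq_mul] at h1 ⊢
      simp only [Matrix.map_apply, hwc]
      exact_mod_cast h1
    rw [Matrix.toLinAlgEquiv'_apply]
    exact this
  · obtain ⟨i, hi⟩ := hw
    intro hz
    apply hi
    have := congrFun hz i
    simpa [hwc] using this

lemma my_spectrum_bound {M : ℕ} (A : Matrix (Fin M) (Fin M) ℝ)
    (h : ∀ i j, 0 < A i j) {r : ℝ} {u : Fin M → ℝ} (hu : ∀ i, 0 < u i)
    (heig : Aᵀ *ᵥ u = r • u) : ∀ z ∈ spectrum ℂ (A.map Complex.ofReal), ‖z‖ ≤ r := by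
  intro z hz
  rw [← AlgEquiv.spectrum_eq (Matrix.toLinAlgEquiv' : Matrix (Fin M) (Fin M) ℂ ≃ₐ[ℂ] _)] at hz
  rw [← Module.End.hasEigenvalue_iff_mem_spectrum] at hz
  obtain ⟨v, hvmem, hvne⟩ := hz.exists_hasEigenvector
  rw [Module.End.mem_eigenspace_iff] at hvmem
  have hvm : (A.map Complex.ofReal) *ᵥ v = z • v := by
    rw [Matrix.toLinAlgEquiv'_apply] at hvmem
    exact hvmem
  have key : ∀ i, ‖z‖ * ‖v i‖ ≤ ∑ j, A i j * ‖v j‖ := by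
    intro i
    have h1 := congrFun hvm i
    simp only [Matrix.mulVec, dotProduct, Pi.smul_apply, smul_eq_mul,
      Matrix.map_apply] at h1
    calc ‖z‖ * ‖v i‖ = ‖z * v i‖ := (norm_mul _ _).symm
    _ = ‖∑ j, (A i j : ℂ) * v j‖ := by rw [← h1]
    _ ≤ ∑ j, ‖(A i j : ℂ) * v j‖ := norm_sum_le _ _
    _ = ∑ j, A i j * ‖v j‖ := by
        apply Finset.sum_congr rfl
        intro j _
        rw [norm_mul, Complex.norm_real, Real.norm_eq_abs, abs_of_pos (h i j)]
  have hcol : ∀ j, ∑ i, u i * A i j = r * u j := by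
    intro j
    have h1 := congrFun heig j
    simp only [Matrix.mulVec, dotProduct, Matrix.transpose_apply, Pi.smul_apply,
      smul_eq_mul] at h1
    rw [← h1]
    exact Finset.sum_congr rfl fun i _ => mul_comm _ _
  set d : ℝ := ∑ i, u i * ‖v i‖ with hd
  have hdpos : 0 < d := by
    have : ∃ i, v i ≠ 0 := by
      by_contra hc
      push_neg at hc
      exact hvne (funext hc)
    obtain ⟨i, hi⟩ := this
    apply Finset.sum_pos'
    · intro j _
      exact mul_nonneg (hu j).le (norm_nonneg _)
    · exact ⟨i, Finset.mem_univ i, mul_pos (hu i) (by simpa using hi)⟩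
  have hineq : ‖z‖ * d ≤ r * d := by
    calc ‖z‖ * d = ∑ i, u i * (‖z‖ * ‖v i‖) := by
          rw [hd, Finset.mul_sum]; exact Finset.sum_congr rfl fun i _ => by ring
    _ ≤ ∑ i, u i * ∑ j, A i j * ‖v j‖ :=
        Finset.sum_le_sum fun i _ => mul_le_mul_of_nonneg_left (key i) (hu i).le
    _ = ∑ j, (∑ i, u i * A i j) * ‖v j‖ := by
        simp_rw [Finset.mul_sum, Finset.sum_mul]
        rw [Finset.sum_comm]
        exact Finset.sum_congr rfl fun j _ => Finset.sum_congr rfl fun i _ => by ring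
    _ = ∑ j, (r * u j) * ‖v j‖ := by
        exact Finset.sum_congr rfl fun j _ => by rw [hcol j]
    _ = r * d := by rw [hd, Finset.mul_sum]; exact Finset.sum_congr rfl fun j _ => by ring
  exact le_of_mul_le_mul_right hineq hdpos

lemma my_pathSum {M : ℕ} (A : Matrix (Fin M) (Fin M) ℝ) (v : Fin M → ℝ) :
    ∀ (n : ℕ) (i0 : Fin M),
      (∑ y : Fin (n+1) → Fin M, if y 0 = i0 then
        (∏ k : Fin n, A (y k.castSucc) (y k.succ)) * v (y (Fin.last n)) else 0)
      = (A ^ n *ᵥ v) i0 := by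
  intro n
  induction n with
  | zero =>
    intro i0
    rw [pow_zero, Matrix.one_mulVec]
    rw [Fintype.sum_equiv (Equiv.funUnique (Fin 1) (Fin M)) _
      (fun j => if j = i0 then v j else 0) (fun y => by simp [Equiv.funUnique])]
    simp
  | succ n ih =>
    intro i0
    have hpow : (A ^ (n+1) *ᵥ v) i0 = ∑ j, A i0 j * (A ^ n *ᵥ v) j := by
      rw [pow_succ', ← Matrix.mulVec_mulVec]
      simp [Matrix.mulVec, dotProduct]
    rw [hpow]
    set e : (Fin M × (Fin (n+1) → Fin M)) ≃ (Fin (n+2) → Fin M) :=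
      Fin.consEquiv (fun _ : Fin (n+2) => Fin M) with he
    set F : (Fin (n+2) → Fin M) → ℝ := fun y => if y 0 = i0 then
        (∏ k : Fin (n+1), A (y k.castSucc) (y k.succ)) * v (y (Fin.last (n+1))) else 0 with hF
    have h1 : ∑ y, F y = ∑ p : Fin M × (Fin (n+1) → Fin M), F (e p) :=
      (Fintype.sum_equiv e (fun p => F (e p)) F (fun p => rfl)).symm
    have h2 : ∀ (a : Fin M) (z : Fin (n+1) → Fin M),
        F (e (a, z)) = if a = i0 then
          A a (z 0) * ((∏ k : Fin n, A (z k.castSucc) (z k.succ)) * v (z (Fin.last n))) else 0 := by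
      intro a z
      rw [hF]
      simp only [he, Fin.consEquiv_apply]
      rw [show (Fin.last (n+1)) = (Fin.last n).succ from (Fin.succ_last n).symm]
      simp only [Fin.prod_univ_succ, Fin.castSucc_zero, Fin.cons_zero, Fin.cons_succ,
        ← Fin.succ_castSucc, mul_assoc]
    rw [h1, Fintype.sum_prod_type]
    have h3 : ∀ a : Fin M, ∑ z : Fin (n+1) → Fin M, F (e (a, z)) =
        if a = i0 then ∑ z : Fin (n+1) → Fin M,
          A a (z 0) * ((∏ k : Fin n, A (z k.castSucc) (z k.succ)) * v (z (Fin.last n))) else 0 := by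
      intro a
      rw [Finset.sum_congr rfl (fun z _ => h2 a z)]
      split_ifs with hc
      · rfl
      · simp
    rw [Finset.sum_congr rfl (fun a _ => h3 a), Finset.sum_ite_eq' Finset.univ i0]
    simp only [Finset.mem_univ, if_true]
    -- now: ∑ z, A i0 (z 0) * H z = ∑ j, A i0 j * (A^n *ᵥ v) j
    have h4 : ∀ z : Fin (n+1) → Fin M,
        A i0 (z 0) * ((∏ k : Fin n, A (z k.castSucc) (z k.succ)) * v (z (Fin.last n)))
        = ∑ j, if z 0 = j then
            A i0 j * ((∏ k : Fin n, A (z k.castSucc) (z k.succ)) * v (z (Fin.last n))) else 0 := by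
      intro z
      rw [Finset.sum_ite_eq Finset.univ (z 0)]
      simp
    rw [Finset.sum_congr rfl (fun z _ => h4 z), Finset.sum_comm]
    apply Finset.sum_congr rfl
    intro j _
    rw [← ih j, Finset.mul_sum]
    apply Finset.sum_congr rfl
    intro z _
    split_ifs with hc
    · rfl
    · rw [mul_zero]

lemma my_pow_bounds {M : ℕ} (hM : 0 < M) (A : Matrix (Fin M) (Fin M) ℝ)
    (h : ∀ i j, 0 < A i j) {r : ℝ} (hr : 0 < r) {u : Fin M → ℝ} (hu : ∀ i, 0 < u i)
    (heig : Aᵀ *ᵥ u = r • u) :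
    ∃ C₁ C₂ : ℝ, 0 < C₁ ∧ 0 < C₂ ∧ ∀ (vmin vmax : ℝ), 0 < vmin → ∀ v : Fin M → ℝ,
      (∀ j, vmin ≤ v j) → (∀ j, v j ≤ vmax) → ∀ n : ℕ, 1 ≤ n → ∀ i0 : Fin M,
        C₁ * vmin * r ^ n ≤ (A ^ n *ᵥ v) i0 ∧ (A ^ n *ᵥ v) i0 ≤ C₂ * vmax * r ^ n := by
  haveI : NeZero M := ⟨hM.ne'⟩
  have hne : (Finset.univ : Finset (Fin M)).Nonempty := univ_nonempty
  have hne2 : (Finset.univ : Finset (Fin M × Fin M)).Nonempty := univ_nonempty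
  set amin : ℝ := Finset.univ.inf' hne2 (fun p : Fin M × Fin M => A p.1 p.2) with hamin
  set amax : ℝ := Finset.univ.sup' hne2 (fun p : Fin M × Fin M => A p.1 p.2) with hamax
  have haminpos : 0 < amin := by
    rw [hamin, Finset.lt_inf'_iff]; exact fun p _ => h p.1 p.2
  have hminle : ∀ i j, amin ≤ A i j := fun i j =>
    Finset.inf'_le _ (Finset.mem_univ (i, j))
  have hlemax : ∀ i j, A i j ≤ amax :=
    fun i j => Finset.le_sup' (fun p : Fin M × Fin M => A p.1 p.2) (Finset.mem_univ (i, j))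
  have hamaxpos : 0 < amax :=
    lt_of_lt_of_le haminpos (le_trans (hminle ⟨0, hM⟩ ⟨0, hM⟩) (hlemax _ _))
  set umin : ℝ := Finset.univ.inf' hne u with humin
  set umax : ℝ := Finset.univ.sup' hne u with humax
  have huminpos : 0 < umin := by rw [humin, Finset.lt_inf'_iff]; exact fun i _ => hu i
  have huminle : ∀ i, umin ≤ u i := fun i => Finset.inf'_le _ (Finset.mem_univ i)
  have hulemax : ∀ i, u i ≤ umax := fun i => Finset.le_sup' u (Finset.mem_univ i)
  have humaxpos : 0 < umax := lt_of_lt_of_le huminpos (le_trans (huminle ⟨0, hM⟩) (hulemax _))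
  set usum : ℝ := ∑ i, u i with husum
  have husumpos : 0 < usum := Finset.sum_pos (fun i _ => hu i) hne
  have huA : u ᵥ* A = r • u := by rw [← Matrix.mulVec_transpose]; exact heig
  have hdot : ∀ (n : ℕ) (v : Fin M → ℝ), u ⬝ᵥ (A ^ n *ᵥ v) = r ^ n * (u ⬝ᵥ v) := by
    intro n
    induction n with
    | zero => intro v; simp [Matrix.one_mulVec]
    | succ n ih =>
      intro v
      rw [pow_succ', ← Matrix.mulVec_mulVec, Matrix.dotProduct_mulVec, huA,
        smul_dotProduct]
      rw [ih v, smul_eq_mul, pow_succ]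
      ring
  have hposn : ∀ (n : ℕ) (v : Fin M → ℝ), (∀ j, 0 < v j) → ∀ i, 0 < (A ^ n *ᵥ v) i := by
    intro n
    induction n with
    | zero => intro v hv i; simpa [Matrix.one_mulVec] using hv i
    | succ n ih =>
      intro v hv i
      rw [pow_succ', ← Matrix.mulVec_mulVec]
      simp only [Matrix.mulVec, dotProduct]
      exact Finset.sum_pos (fun j _ => mul_pos (h i j) (ih v hv j)) hne
  refine ⟨usum * amin / (M * umax * amax), usum / umin, by positivity, by positivity, ?_⟩
  intro vmin vmax hvmin v hv1 hv2 n hn i0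
  have hvpos : ∀ j, 0 < v j := fun j => lt_of_lt_of_le hvmin (hv1 j)
  have hvmax : 0 < vmax := lt_of_lt_of_le (hvpos ⟨0, hM⟩) (hv2 _)
  have hWpos : ∀ i, 0 < (A ^ n *ᵥ v) i := hposn n v hvpos
  have hdotv : u ⬝ᵥ (A ^ n *ᵥ v) = r ^ n * (u ⬝ᵥ v) := hdot n v
  have hdots : u ⬝ᵥ (A ^ n *ᵥ v) = ∑ j, u j * (A ^ n *ᵥ v) j := rfl
  have huvlow : usum * vmin ≤ u ⬝ᵥ v := by
    rw [husum, Finset.sum_mul]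
    exact Finset.sum_le_sum fun j _ => mul_le_mul_of_nonneg_left (hv1 j) (hu j).le
  have huvhigh : u ⬝ᵥ v ≤ usum * vmax := by
    rw [husum, Finset.sum_mul]
    exact Finset.sum_le_sum fun j _ => mul_le_mul_of_nonneg_left (hv2 j) (hu j).le
  constructor
  · -- lower bound
    obtain ⟨m, rfl⟩ : ∃ m, n = m + 1 := ⟨n - 1, (Nat.succ_pred_eq_of_pos hn).symm⟩
    have hcomp : ∀ i, (A ^ (m+1) *ᵥ v) i ≤ (amax / amin) * (A ^ (m+1) *ᵥ v) i0 := by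
      intro i
      have hWm : ∀ j, 0 < (A ^ m *ᵥ v) j := hposn m v hvpos
      have he1 : ∀ i', (A ^ (m+1) *ᵥ v) i' = ∑ j, A i' j * (A ^ m *ᵥ v) j := by
        intro i'
        rw [pow_succ', ← Matrix.mulVec_mulVec]
        rfl
      rw [he1 i, he1 i0, Finset.mul_sum]
      apply Finset.sum_le_sum
      intro j _
      have h1 : A i j ≤ (amax / amin) * A i0 j := by
        rw [div_mul_eq_mul_div, le_div_iff₀ haminpos]
        calc A i j * amin ≤ amax * amin := by nlinarith [hminle i j, hlemax i j, haminpos]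
        _ ≤ amax * A i0 j := by nlinarith [hminle i0 j, hamaxpos]
      calc A i j * (A ^ m *ᵥ v) j ≤ ((amax / amin) * A i0 j) * (A ^ m *ᵥ v) j :=
        mul_le_mul_of_nonneg_right h1 (hWm j).le
      _ = amax / amin * (A i0 j * (A ^ m *ᵥ v) j) := by ring
    have hkey : r ^ (m+1) * (usum * vmin) ≤ (M * umax * (amax / amin)) * (A ^ (m+1) *ᵥ v) i0 := by
      calc r ^ (m+1) * (usum * vmin) ≤ r ^ (m+1) * (u ⬝ᵥ v) := by
            apply mul_le_mul_of_nonneg_left huvlow (by positivity)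
      _ = u ⬝ᵥ (A ^ (m+1) *ᵥ v) := (hdot (m+1) v).symm
      _ = ∑ j, u j * (A ^ (m+1) *ᵥ v) j := rfl
      _ ≤ ∑ _j : Fin M, umax * ((amax / amin) * (A ^ (m+1) *ᵥ v) i0) := by
            apply Finset.sum_le_sum
            intro j _
            calc u j * (A ^ (m+1) *ᵥ v) j ≤ umax * (A ^ (m+1) *ᵥ v) j :=
              mul_le_mul_of_nonneg_right (hulemax j) (hposn (m+1) v hvpos j).le
            _ ≤ umax * ((amax / amin) * (A ^ (m+1) *ᵥ v) i0) :=
              mul_le_mul_of_nonneg_left (hcomp j) humaxpos.le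
      _ = (M * umax * (amax / amin)) * (A ^ (m+1) *ᵥ v) i0 := by
            rw [Finset.sum_const, Finset.card_univ]
            simp
            ring
    have hMpos : (0:ℝ) < M * umax * (amax / amin) := by positivity
    rw [show usum * amin / (M * umax * amax) * vmin * r ^ (m+1)
        = r ^ (m+1) * (usum * vmin) / (M * umax * (amax / amin)) by field_simp]
    rw [div_le_iff₀ hMpos]
    nlinarith [hkey]
  · -- upper bound
    have h1 : umin * (A ^ n *ᵥ v) i0 ≤ u i0 * (A ^ n *ᵥ v) i0 :=
      mul_le_mul_of_nonneg_right (huminle i0) (hWpos i0).le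
    have h2 : u i0 * (A ^ n *ᵥ v) i0 ≤ ∑ j, u j * (A ^ n *ᵥ v) j :=
      Finset.single_le_sum (fun j _ => mul_nonneg (hu j).le (hWpos j).le) (Finset.mem_univ i0)
    have h3 : (∑ j, u j * (A ^ n *ᵥ v) j) = r ^ n * (u ⬝ᵥ v) := hdotv
    have h4 : r ^ n * (u ⬝ᵥ v) ≤ r ^ n * (usum * vmax) :=
      mul_le_mul_of_nonneg_left huvhigh (by positivity)
    have h5 : umin * (A ^ n *ᵥ v) i0 ≤ r ^ n * (usum * vmax) := by
      rw [← h3] at h4; linarith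
    rw [div_mul_eq_mul_div, div_mul_eq_mul_div, le_div_iff₀ huminpos]
    calc (A ^ n *ᵥ v) i0 * umin = umin * (A ^ n *ᵥ v) i0 := by ring
    _ ≤ r ^ n * (usum * vmax) := h5
    _ = usum * vmax * r ^ n := by ring
theorem exponential_functional_discrete_observation_estimate
    (M : ℕ) (hM : 0 < M) (P : Matrix (Fin M) (Fin M) ℝ)
    (hpos : ∀ i j, 0 < P i j) (hrow : ∀ i, ∑ j, P i j = 1)
    (b : Fin M → ℝ) (τ : ℝ) (hτ : 0 < τ)
    (lam1 : ℝ)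
    (hlam : IsGreatest {x : ℝ | ∃ z ∈
        spectrum ℂ ((Matrix.of fun i j => Real.exp (τ * b i) * P i j).map Complex.ofReal),
        x = z.re} lam1) :
    ∃ K₁ K₂ : ℝ, 0 < K₁ ∧ 0 < K₂ ∧ ∃ T : ℝ, 0 < T ∧
      ∀ t : ℝ, T ≤ t → ∀ i₀ : Fin M,
        K₁ * lam1 ^ (t / τ) ≤
          (∑ y : Fin (⌊t / τ⌋₊ + 1) → Fin M,
            if y 0 = i₀ then
              (∏ k : Fin ⌊t / τ⌋₊, P (y k.castSucc) (y k.succ)) *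
                Real.exp (τ * ∑ k : Fin ⌊t / τ⌋₊, b (y k.castSucc)
                  + (t - (⌊t / τ⌋₊ : ℝ) * τ) * b (y (Fin.last ⌊t / τ⌋₊)))
            else 0) ∧
        (∑ y : Fin (⌊t / τ⌋₊ + 1) → Fin M,
            if y 0 = i₀ then
              (∏ k : Fin ⌊t / τ⌋₊, P (y k.castSucc) (y k.succ)) *
                Real.exp (τ * ∑ k : Fin ⌊t / τ⌋₊, b (y k.castSucc)
                  + (t - (⌊t / τ⌋₊ : ℝ) * τ) * b (y (Fin.last ⌊t / τ⌋₊)))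
            else 0) ≤ K₂ * lam1 ^ (t / τ) := by
  haveI : NeZero M := ⟨hM.ne'⟩
  have hne : (Finset.univ : Finset (Fin M)).Nonempty := univ_nonempty
  set A : Matrix (Fin M) (Fin M) ℝ := Matrix.of fun i j => Real.exp (τ * b i) * P i j with hA
  have hApos : ∀ i j, 0 < A i j := fun i j => mul_pos (Real.exp_pos _) (hpos i j)
  have hATpos : ∀ i j, 0 < Aᵀ i j := fun i j => hApos j i
  obtain ⟨r, hrpos, u, hu, huEig⟩ := my_perron hM Aᵀ hATpos
  obtain ⟨r', hr'pos, w, hw, hwEig⟩ := my_perron hM A hApos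
  have hvecMul : u ᵥ* A = r • u := by rw [← Matrix.mulVec_transpose]; exact huEig
  have huw : 0 < u ⬝ᵥ w := Finset.sum_pos (fun i _ => mul_pos (hu i) (hw i)) hne
  have hrr : r' = r := by
    have h1 : u ⬝ᵥ (A *ᵥ w) = r * (u ⬝ᵥ w) := by
      rw [Matrix.dotProduct_mulVec, hvecMul, smul_dotProduct, smul_eq_mul]
    have h2 : u ⬝ᵥ (A *ᵥ w) = r' * (u ⬝ᵥ w) := by
      rw [hwEig, dotProduct_smul, smul_eq_mul]
    exact mul_right_cancel₀ huw.ne' (h2.symm.trans h1)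
  rw [hrr] at hwEig hr'pos
  have hr_mem : (r : ℂ) ∈ spectrum ℂ (A.map Complex.ofReal) :=
    my_mem_spectrum A ⟨⟨0, hM⟩, (hw ⟨0, hM⟩).ne'⟩ hwEig
  have hub := my_spectrum_bound A hApos hu huEig
  have hlam1 : lam1 = r := by
    have h1 : r ≤ lam1 := hlam.2 ⟨(r : ℂ), hr_mem, by simp⟩
    have h2 : lam1 ≤ r := by
      obtain ⟨z, hzmem, hzre⟩ := hlam.1
      calc lam1 = z.re := hzre
      _ ≤ ‖z‖ := Complex.re_le_norm z
      _ ≤ r := hub z hzmem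
    linarith
  obtain ⟨C₁, C₂, hC₁, hC₂, hbound⟩ := my_pow_bounds hM A hApos hrpos hu huEig
  set B : ℝ := Finset.univ.sup' hne (fun j => |b j|) with hB
  have hBle : ∀ j, |b j| ≤ B := fun j => Finset.le_sup' (fun j => |b j|) (Finset.mem_univ j)
  have hB0 : 0 ≤ B := le_trans (abs_nonneg _) (hBle ⟨0, hM⟩)
  set vmin : ℝ := Real.exp (-(τ * B)) with hvmin
  set vmax : ℝ := Real.exp (τ * B) with hvmax
  have hvminpos : 0 < vmin := Real.exp_pos _
  set ρmin : ℝ := min 1 r with hρmin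
  set ρmax : ℝ := max 1 r with hρmax
  have hρminpos : 0 < ρmin := lt_min one_pos hrpos
  have hρmaxpos : 0 < ρmax := lt_of_lt_of_le one_pos (le_max_left 1 r)
  refine ⟨C₁ * vmin / ρmax, C₂ * vmax / ρmin, by positivity, by positivity, τ, hτ, ?_⟩
  intro t ht i₀
  set n : ℕ := ⌊t / τ⌋₊ with hn
  have htpos : 0 < t := lt_of_lt_of_le hτ ht
  have htdiv : 1 ≤ t / τ := (one_le_div hτ).2 ht
  have hn1 : 1 ≤ n := by
    rw [hn]
    exact Nat.le_floor (by exact_mod_cast htdiv)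
  have hnle : (n : ℝ) ≤ t / τ := Nat.floor_le (by positivity)
  have hlt : t / τ < n + 1 := Nat.lt_floor_add_one _
  have hrem0 : 0 ≤ t - n * τ := by
    have := (le_div_iff₀ hτ).1 hnle
    linarith
  have hremlt : t - n * τ < τ := by
    have := (div_lt_iff₀ hτ).1 hlt
    nlinarith
  set v : Fin M → ℝ := fun j => Real.exp ((t - n * τ) * b j) with hv
  have hvabs : ∀ j, |(t - n * τ) * b j| ≤ τ * B := by
    intro j
    rw [abs_mul]
    apply mul_le_mul
    · rw [abs_of_nonneg hrem0]; linarith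
    · exact hBle j
    · exact abs_nonneg _
    · exact hτ.le
  have hv1 : ∀ j, vmin ≤ v j := by
    intro j
    rw [hvmin, hv]
    apply Real.exp_le_exp.2
    have := (abs_le.1 (hvabs j)).1
    linarith
  have hv2 : ∀ j, v j ≤ vmax := by
    intro j
    rw [hvmax, hv]
    apply Real.exp_le_exp.2
    exact (abs_le.1 (hvabs j)).2
  have htrans : (∑ y : Fin (n + 1) → Fin M,
      if y 0 = i₀ then
        (∏ k : Fin n, P (y k.castSucc) (y k.succ)) *
          Real.exp (τ * ∑ k : Fin n, b (y k.castSucc)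
            + (t - (n : ℝ) * τ) * b (y (Fin.last n)))
      else 0) = (A ^ n *ᵥ v) i₀ := by
    rw [← my_pathSum A v n i₀]
    apply Finset.sum_congr rfl
    intro y _
    split_ifs with hc
    · rw [Real.exp_add, Finset.mul_sum, Real.exp_sum]
      have hAe : ∀ k : Fin n, A (y k.castSucc) (y k.succ)
          = Real.exp (τ * b (y k.castSucc)) * P (y k.castSucc) (y k.succ) := fun k => rfl
      rw [Finset.prod_congr rfl (fun k _ => hAe k), Finset.prod_mul_distrib]
      rw [hv]
      ring
    · rfl
  have hsplit : r ^ (t / τ) = r ^ (n : ℕ) * r ^ (t / τ - n) := by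
    rw [← Real.rpow_natCast r n, ← Real.rpow_add hrpos]
    congr 1
    ring
  have hs0 : 0 ≤ t / τ - n := by linarith
  have hs1 : t / τ - n ≤ 1 := by linarith
  have hrs_le : r ^ (t / τ - n) ≤ ρmax := by
    rcases le_total 1 r with h1r | h1r
    · calc r ^ (t / τ - n) ≤ r ^ (1 : ℝ) := Real.rpow_le_rpow_of_exponent_le h1r hs1
      _ = r := Real.rpow_one r
      _ ≤ ρmax := le_max_right 1 r
    · calc r ^ (t / τ - n) ≤ r ^ (0 : ℝ) := Real.rpow_le_rpow_of_exponent_ge hrpos h1r hs0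
      _ = 1 := Real.rpow_zero r
      _ ≤ ρmax := le_max_left 1 r
  have hrs_ge : ρmin ≤ r ^ (t / τ - n) := by
    rcases le_total 1 r with h1r | h1r
    · calc ρmin ≤ 1 := min_le_left 1 r
      _ = r ^ (0 : ℝ) := (Real.rpow_zero r).symm
      _ ≤ r ^ (t / τ - n) := Real.rpow_le_rpow_of_exponent_le h1r hs0
    · calc ρmin ≤ r := min_le_right 1 r
      _ = r ^ (1 : ℝ) := (Real.rpow_one r).symm
      _ ≤ r ^ (t / τ - n) := Real.rpow_le_rpow_of_exponent_ge hrpos h1r hs1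
  obtain ⟨hlow, hup⟩ := hbound vmin vmax hvminpos v hv1 hv2 n hn1 i₀
  rw [htrans, hlam1, hsplit]
  have hrpowpos : (0:ℝ) < r ^ (n : ℕ) := pow_pos hrpos n
  have hrspos : (0:ℝ) < r ^ (t / τ - n) := Real.rpow_pos_of_pos hrpos _
  constructor
  · calc C₁ * vmin / ρmax * (r ^ (n : ℕ) * r ^ (t / τ - n))
        = (C₁ * vmin * r ^ (n : ℕ)) * (r ^ (t / τ - n) / ρmax) := by ring
    _ ≤ (C₁ * vmin * r ^ (n : ℕ)) * 1 :=
        mul_le_mul_of_nonneg_left ((div_le_one hρmaxpos).2 hrs_le) (by positivity)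
    _ = C₁ * vmin * r ^ (n : ℕ) := mul_one _
    _ ≤ (A ^ n *ᵥ v) i₀ := hlow
  · calc (A ^ n *ᵥ v) i₀ ≤ C₂ * vmax * r ^ (n : ℕ) := hup
    _ = (C₂ * vmax / ρmin * (r ^ (n : ℕ) * r ^ (t / τ - n))) * (ρmin / r ^ (t / τ - n)) := by
        field_simp
    _ ≤ (C₂ * vmax / ρmin * (r ^ (n : ℕ) * r ^ (t / τ - n))) * 1 :=
        mul_le_mul_of_nonneg_left ((div_le_one hrspos).2 hrs_ge) (by positivity)
    _ = C₂ * vmax / ρmin * (r ^ (n : ℕ) * r ^ (t / τ - n)) := mul_one _
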